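/- arXiv:1609.01170 — 2 statements merged into one kernel-verified Lean document; each statement's English description precedes it below -/
import Mathlib

section
/- Let K be a field of characteristic zero, let k ≥ 1, let μ₁ < μ₂ < ⋯ < μ_k be natural numbers, and let P₁, …, P_k ∈ K[[X]] be formal power series each with constant coefficient 1. Let W be the k × k matrix over K[[X]] with entries W_{i,j} := (d/dX)^{j−1}(X^{μ_i}P_i) for 1 ≤ i, j ≤ k, and set d₀ := (μ₁ + ⋯ + μ_k) − k(k−1)/2. Then the coefficient of X^n in det W vanishes for all n < d₀, and the coefficient of X^{d₀} in det W equals the Vandermonde product ∏_{1≤i<j≤k}(μ_j − μ_i)·1_K, which is nonzero; in particular the order of det W equals d₀. -/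
open PowerSeries Finset

private lemma coeff_iter_deriv {K : Type*} [Field K] (f : PowerSeries K) (j n : ℕ) :
    PowerSeries.coeff n ((⇑(PowerSeries.derivative K))^[j] f)
      = ((n + j).descFactorial j : K) * PowerSeries.coeff (n + j) f := by
  induction j generalizing n with
  | zero => simp
  | succ j ih =>
    rw [Function.iterate_succ_apply', PowerSeries.coeff_derivative, ih (n + 1)]
    have h1 : n + 1 + j = n + (j + 1) := by ring
    rw [h1]
    have h2 : (n + (j + 1)).descFactorial (j + 1) = (n + 1) * (n + (j + 1)).descFactorial j := by
      rw [Nat.descFactorial_succ]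
      congr 1
      omega
    rw [h2]
    push_cast
    ring

/-- Wronskian-type statement: for power series `Pᵢ` with constant coefficient `1` and strictly
increasing natural exponents `μ₁ < ⋯ < μ_k`, the determinant of the matrix
`W i j = (d/dX)^j (X^{μ i} * P i)` (for `i, j ∈ Fin k`) has order
`d₀ = (∑ μ i) - k(k-1)/2`, with leading coefficient the Vandermonde product
`∏_{i<j} (μ j - μ i) ≠ 0`. -/
theorem stmt8 {K : Type*} [Field K] [CharZero K] (k : ℕ) (hk : 1 ≤ k)
    (μ : Fin k → ℕ) (hμ : StrictMono μ)
    (P : Fin k → PowerSeries K)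
    (hP : ∀ i, PowerSeries.constantCoeff (P i) = 1) :
    ∀ W : Matrix (Fin k) (Fin k) (PowerSeries K),
      (W = fun (i j : Fin k) => (⇑(PowerSeries.derivative K))^[(j : ℕ)] (PowerSeries.X ^ μ i * P i)) →
      ∀ d₀ : ℕ, d₀ = (∑ i, μ i) - k * (k - 1) / 2 →
      (∀ n : ℕ, n < d₀ → PowerSeries.coeff n W.det = 0)
      ∧ PowerSeries.coeff d₀ W.det = ∏ i : Fin k, ∏ j ∈ Finset.Ioi i, ((μ j - μ i : ℕ) : K)
      ∧ (∏ i : Fin k, ∏ j ∈ Finset.Ioi i, ((μ j - μ i : ℕ) : K)) ≠ 0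
      ∧ W.det.order = (d₀ : ℕ) := by
  intro W hW d₀ hd₀
  -- `i ≤ μ i`
  have hle' : ∀ m : ℕ, ∀ i : Fin k, (i : ℕ) = m → m ≤ μ i := by
    intro m
    induction m with
    | zero => intro i _; exact Nat.zero_le _
    | succ m ih =>
      intro i hi
      have hik := i.isLt
      have hm : m < k := by omega
      have h1 := ih ⟨m, hm⟩ rfl
      have h2 : μ ⟨m, hm⟩ < μ i := hμ (by simp [Fin.lt_def]; omega)
      omega
  have hle : ∀ i : Fin k, (i : ℕ) ≤ μ i := fun i => hle' _ i rfl
  have hT : ∑ i : Fin k, (i : ℕ) = k * (k - 1) / 2 := by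
    rw [Fin.sum_univ_eq_sum_range (fun i => i) k]
    exact Finset.sum_range_id k
  have hTμ : ∑ i : Fin k, (i : ℕ) ≤ ∑ i, μ i := Finset.sum_le_sum fun i _ => hle i
  have hd : d₀ + ∑ i : Fin k, (i : ℕ) = ∑ i, μ i := by
    rw [hd₀, ← hT]; omega
  -- coefficients of the entries
  have hWc : ∀ (i j : Fin k) (n : ℕ),
      PowerSeries.coeff n (W i j) = ((n + (j : ℕ)).descFactorial (j : ℕ) : K) *
        (if μ i ≤ n + (j : ℕ) then PowerSeries.coeff (n + (j : ℕ) - μ i) (P i) else 0) := by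
    intro i j n
    rw [hW]
    simp only
    rw [coeff_iter_deriv, PowerSeries.coeff_X_pow_mul']
  -- if a product of entry coefficients is nonzero, the constraints hold
  have key : ∀ (σ : Equiv.Perm (Fin k)) (l : Fin k →₀ ℕ),
      (∏ i, PowerSeries.coeff (l i) (W (σ i) i)) ≠ 0 → ∀ i : Fin k, μ (σ i) ≤ l i + i := by
    intro σ l h i
    by_contra hc
    apply h
    apply Finset.prod_eq_zero (Finset.mem_univ i)
    rw [hWc, if_neg (by omega), mul_zero]
  have hσμ : ∀ σ : Equiv.Perm (Fin k), ∑ i : Fin k, μ (σ i) = ∑ i, μ i :=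
    fun σ => Equiv.sum_comp σ μ
  -- low coefficients vanish
  have hlow : ∀ n : ℕ, n < d₀ → PowerSeries.coeff n W.det = 0 := by
    intro n hn
    rw [Matrix.det_apply, map_sum]
    apply Finset.sum_eq_zero
    intro σ _
    rw [Units.smul_def, map_zsmul, PowerSeries.coeff_prod]
    convert smul_zero _
    apply Finset.sum_eq_zero
    intro l hl
    by_contra hne
    have h1 := key σ l hne
    have h2 : ∑ i : Fin k, μ (σ i) ≤ ∑ i : Fin k, (l i + (i : ℕ)) :=
      Finset.sum_le_sum fun i _ => h1 i
    rw [Finset.sum_add_distrib] at h2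
    have h3 := hσμ σ
    have h4 : ∑ i : Fin k, l i = n := (Finset.mem_finsuppAntidiag.mp hl).1
    omega
  -- leading coefficient as a determinant of descending factorials
  have hmain : PowerSeries.coeff d₀ W.det =
      Matrix.det (Matrix.of fun i j : Fin k => ((μ i).descFactorial (j : ℕ) : K)) := by
    rw [Matrix.det_apply, map_sum, Matrix.det_apply]
    apply Finset.sum_congr rfl
    intro σ _
    rw [Units.smul_def, Units.smul_def, map_zsmul]
    congr 1
    rw [PowerSeries.coeff_prod]
    by_cases hcase : ∀ i : Fin k, (i : ℕ) ≤ μ (σ i)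
    · set l₀ : Fin k →₀ ℕ := Finsupp.equivFunOnFinite.symm (fun i => μ (σ i) - i) with hl₀
      have hl₀app : ∀ i, l₀ i = μ (σ i) - i := fun i => rfl
      have hl₀sum : ∑ i : Fin k, l₀ i = d₀ := by
        simp only [hl₀app]
        rw [Finset.sum_tsub_distrib _ fun i _ => hcase i, hσμ σ]
        omega
      have hmem : l₀ ∈ Finset.finsuppAntidiag (Finset.univ : Finset (Fin k)) d₀ :=
        Finset.mem_finsuppAntidiag.mpr ⟨hl₀sum, Finset.subset_univ _⟩
      rw [Finset.sum_eq_single_of_mem l₀ hmem]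
      · apply Finset.prod_congr rfl
        intro i _
        rw [hWc, hl₀app]
        have hi : μ (σ i) - (i : ℕ) + (i : ℕ) = μ (σ i) := by
          have := hcase i; omega
        rw [hi, if_pos le_rfl, Nat.sub_self]
        rw [PowerSeries.coeff_zero_eq_constantCoeff, hP (σ i), mul_one]
        simp
      · intro l hl hne
        by_contra hne'
        have h1 := key σ l hne'
        have h4 : ∑ i : Fin k, l i = d₀ := (Finset.mem_finsuppAntidiag.mp hl).1
        obtain ⟨i₀, hi₀⟩ : ∃ i : Fin k, l i ≠ l₀ i := by
          by_contra hc
          push_neg at hc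
          exact hne (Finsupp.ext hc)
        have hstrict : μ (σ i₀) < l i₀ + (i₀ : ℕ) := by
          have := h1 i₀
          have := hcase i₀
          have := hl₀app i₀
          omega
        have h2 : ∑ i : Fin k, μ (σ i) < ∑ i : Fin k, (l i + (i : ℕ)) :=
          Finset.sum_lt_sum (fun i _ => h1 i) ⟨i₀, Finset.mem_univ _, hstrict⟩
        rw [Finset.sum_add_distrib] at h2
        have h3 := hσμ σ
        omega
    · push_neg at hcase
      obtain ⟨i₀, hi₀⟩ := hcase
      rw [Finset.sum_eq_zero, Finset.prod_eq_zero (Finset.mem_univ i₀)]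
      · rw [Matrix.of_apply]
        norm_cast
        exact Nat.descFactorial_eq_zero_iff_lt.mpr hi₀
      · intro l hl
        by_contra hne'
        have h1 := key σ l hne'
        have h4 : ∑ i : Fin k, l i = d₀ := (Finset.mem_finsuppAntidiag.mp hl).1
        have hstrict : μ (σ i₀) < l i₀ + (i₀ : ℕ) := by omega
        have h2 : ∑ i : Fin k, μ (σ i) < ∑ i : Fin k, (l i + (i : ℕ)) :=
          Finset.sum_lt_sum (fun i _ => h1 i) ⟨i₀, Finset.mem_univ _, hstrict⟩
        rw [Finset.sum_add_distrib] at h2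
        have h3 := hσμ σ
        omega
  -- the descending factorial determinant is the Vandermonde product
  have hdet : Matrix.det (Matrix.of fun i j : Fin k => ((μ i).descFactorial (j : ℕ) : K))
      = ∏ i : Fin k, ∏ j ∈ Finset.Ioi i, ((μ j - μ i : ℕ) : K) := by
    have h1 := Matrix.det_eval_matrixOfPolynomials_eq_det_vandermonde
      (fun i : Fin k => (μ i : K)) (fun j : Fin k => descPochhammer K (j : ℕ))
      (fun j => descPochhammer_natDegree K (j : ℕ))
      (fun j => monic_descPochhammer K (j : ℕ))
    have h2 : (Matrix.of fun i j : Fin k => ((μ i).descFactorial (j : ℕ) : K))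
        = Matrix.of fun i j : Fin k => (descPochhammer K (j : ℕ)).eval ((μ i : K)) := by
      ext i j
      simp [descPochhammer_eval_eq_descFactorial]
    rw [h2, ← h1, Matrix.det_vandermonde]
    apply Finset.prod_congr rfl
    intro i _
    apply Finset.prod_congr rfl
    intro j hj
    have hij : μ i ≤ μ j := (hμ (Finset.mem_Ioi.mp hj)).le
    rw [Nat.cast_sub hij]
  have hne : (∏ i : Fin k, ∏ j ∈ Finset.Ioi i, ((μ j - μ i : ℕ) : K)) ≠ 0 := by
    apply Finset.prod_ne_zero_iff.mpr
    intro i _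
    apply Finset.prod_ne_zero_iff.mpr
    intro j hj
    have : μ i < μ j := hμ (Finset.mem_Ioi.mp hj)
    exact Nat.cast_ne_zero.mpr (by omega)
  refine ⟨hlow, hmain.trans hdet, hne, ?_⟩
  rw [PowerSeries.order_eq_nat]
  exact ⟨by rw [hmain, hdet]; exact hne, hlow⟩
end

section
/- Let K be a field of characteristic zero, let k ≥ 1, let μ₁ < μ₂ < ⋯ < μ_k be natural numbers, and let P₁, …, P_k ∈ K[[X]] be formal power series each with constant coefficient 1. Let D denote the operator D(f) := X·(d/dX)(f) on K[[X]], and let M be the k × k matrix over K[[X]] with entries M_{i,j} := D^{j−1}(X^{μ_i}P_i) for 1 ≤ i, j ≤ k. Then the coefficient of X^n in det M vanishes for all n < μ₁ + ⋯ + μ_k, and the coefficient of X^{μ₁+⋯+μ_k} in det M equals the Vandermonde product ∏_{1≤i<j≤k}(μ_j − μ_i)·1_K, which is nonzero; in particular the order of det M equals μ₁ + ⋯ + μ_k. -/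
open PowerSeries Finset

private lemma coeff_XD_iter {K : Type*} [Field K] (j : ℕ) (g : PowerSeries K) (n : ℕ) :
    PowerSeries.coeff n
        ((fun f : PowerSeries K => PowerSeries.X * PowerSeries.derivative K f)^[j] g)
      = (n : K) ^ j * PowerSeries.coeff n g := by
  induction j generalizing g with
  | zero => simp
  | succ j ih =>
    rw [Function.iterate_succ_apply, ih]
    cases n with
    | zero => simp
    | succ n =>
      rw [PowerSeries.coeff_succ_X_mul, PowerSeries.coeff_derivative]
      push_cast
      ring

private lemma perm_id_of_le {k : ℕ} (τ : Equiv.Perm (Fin k)) (h : ∀ i, i ≤ τ i) (i : Fin k) :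
    τ i = i := by
  have hsum : ∑ i : Fin k, ((τ i : ℕ)) = ∑ i : Fin k, (i : ℕ) := Equiv.sum_comp τ _
  have h2 := (Finset.sum_eq_sum_iff_of_le (f := fun i : Fin k => (i : ℕ))
    (g := fun i : Fin k => ((τ i : ℕ))) (fun i _ => by exact_mod_cast h i)).mp hsum.symm
  exact Fin.ext ((h2 i (Finset.mem_univ i)).symm)

private lemma sorted_ge {k : ℕ} (μ l : Fin k → ℕ) (hμ : StrictMono μ)
    (hinj : Function.Injective l) (hle : ∀ i, μ i ≤ l i) :
    (∑ i, μ i ≤ ∑ i, l i) ∧ (∑ i, l i = ∑ i, μ i → l = μ) := by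
  set σ := Tuple.sort l with hσ
  have hmono : Monotone (l ∘ σ) := Tuple.monotone_sort l
  have hm : ∀ i, μ i ≤ l (σ i) := by
    intro i
    by_contra hcon
    push_neg at hcon
    have hmap : ∀ t ∈ Finset.Iic i, σ t ∈ Finset.Iio i := by
      intro t ht
      rw [Finset.mem_Iic] at ht
      rw [Finset.mem_Iio]
      have h1 : l (σ t) ≤ l (σ i) := hmono ht
      have h2 : μ (σ t) < μ i := lt_of_le_of_lt (le_trans (hle _) h1) hcon
      exact hμ.lt_iff_lt.mp h2
    have hcard := Finset.card_le_card_of_injOn (fun t => σ t) hmap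
      (fun a _ b _ hab => σ.injective hab)
    rw [Fin.card_Iic, Fin.card_Iio] at hcard
    omega
  have hsum : ∑ i, l (σ i) = ∑ i, l i := Equiv.sum_comp σ l
  constructor
  · calc ∑ i, μ i ≤ ∑ i, l (σ i) := Finset.sum_le_sum fun i _ => hm i
      _ = ∑ i, l i := hsum
  · intro heq
    have h2 : ∀ i ∈ Finset.univ, μ i = l (σ i) :=
      (Finset.sum_eq_sum_iff_of_le (fun i _ => hm i)).mp (by rw [hsum, heq])
    have hτ : ∀ i, i ≤ σ.symm i := by
      intro i
      have hmm : μ i ≤ μ (σ.symm i) :=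
        calc μ i ≤ l i := hle i
          _ = l (σ (σ.symm i)) := by rw [σ.apply_symm_apply]
          _ = μ (σ.symm i) := (h2 _ (Finset.mem_univ _)).symm
      exact hμ.le_iff_le.mp hmm
    have hid : ∀ i, σ.symm i = i := perm_id_of_le σ.symm hτ
    funext i
    calc l i = l (σ (σ.symm i)) := by rw [σ.apply_symm_apply]
      _ = μ (σ.symm i) := (h2 _ (Finset.mem_univ _)).symm
      _ = μ i := by rw [hid]

/-- For power series `Pᵢ` with constant coefficient `1` and strictly increasing natural
exponents `μ₁ < ⋯ < μ_k`, the determinant of the matrix `M i j = D^j (X^{μ i} * P i)`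
(for `i, j ∈ Fin k`), where `D = X·d/dX`, has order `∑ μ i`, with leading coefficient the
Vandermonde product `∏_{i<j} (μ j - μ i) ≠ 0`. -/
theorem stmt9 {K : Type*} [Field K] [CharZero K] (k : ℕ) (hk : 1 ≤ k)
    (μ : Fin k → ℕ) (hμ : StrictMono μ)
    (P : Fin k → PowerSeries K)
    (hP : ∀ i, PowerSeries.constantCoeff (P i) = 1) :
    ∀ M : Matrix (Fin k) (Fin k) (PowerSeries K),
      (M = fun (i j : Fin k) =>
        (fun f : PowerSeries K => PowerSeries.X * PowerSeries.derivative K f)^[(j : ℕ)]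
          (PowerSeries.X ^ μ i * P i)) →
      (∀ n : ℕ, n < ∑ i, μ i → PowerSeries.coeff n M.det = 0)
      ∧ PowerSeries.coeff (∑ i, μ i) M.det
          = ∏ i : Fin k, ∏ j ∈ Finset.Ioi i, ((μ j - μ i : ℕ) : K)
      ∧ (∏ i : Fin k, ∏ j ∈ Finset.Ioi i, ((μ j - μ i : ℕ) : K)) ≠ 0
      ∧ M.det.order = ((∑ i, μ i : ℕ) : ℕ∞) := by
  intro M hM
  classical
  have hent : ∀ (m : ℕ) (i j : Fin k),
      PowerSeries.coeff m (M i j)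
        = PowerSeries.coeff m (PowerSeries.X ^ μ i * P i) * (m : K) ^ (j : ℕ) := by
    intro m i j
    simp only [hM]
    rw [coeff_XD_iter]
    ring
  -- key coefficient formula
  have hkey : ∀ n : ℕ, PowerSeries.coeff n M.det
      = ∑ l ∈ Finset.finsuppAntidiag (Finset.univ : Finset (Fin k)) n,
          (∏ i, PowerSeries.coeff (l i) (PowerSeries.X ^ μ i * P i)) *
            ∏ i : Fin k, ∏ j ∈ Finset.Ioi i, (((l j : ℕ) : K) - ((l i : ℕ) : K)) := by
    intro n
    set A := Finset.finsuppAntidiag (Finset.univ : Finset (Fin k)) n with hA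
    have hAmem : ∀ (σ : Equiv.Perm (Fin k)) (l : Fin k →₀ ℕ),
        l ∈ A ↔ Finsupp.equivCongrLeft σ l ∈ A := by
      intro σ l
      have hs : Finset.univ.sum ⇑(Finsupp.equivCongrLeft σ l) = Finset.univ.sum ⇑l := by
        simp only [Finsupp.equivCongrLeft_apply, Finsupp.equivMapDomain_apply]
        exact Equiv.sum_comp σ.symm l
      simp only [hA, Finset.mem_finsuppAntidiag, Finset.subset_univ, and_true, hs]
    have step1 : PowerSeries.coeff n M.det
        = ∑ σ : Equiv.Perm (Fin k), (Equiv.Perm.sign σ : ℤ) •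
            ∑ l ∈ A, ∏ i, PowerSeries.coeff (l i) (M (σ i) i) := by
      rw [Matrix.det_apply, map_sum]
      refine Finset.sum_congr rfl fun σ _ => ?_
      rw [Units.smul_def, map_zsmul, PowerSeries.coeff_prod]
    have step2 : ∀ σ : Equiv.Perm (Fin k),
        ∑ l ∈ A, ∏ i, PowerSeries.coeff (l i) (M (σ i) i)
          = ∑ l ∈ A, ∏ i, PowerSeries.coeff (l (σ i)) (M (σ i) i) := by
      intro σ
      refine Finset.sum_equiv (Finsupp.equivCongrLeft σ) (hAmem σ) ?_
      intro l _
      refine Finset.prod_congr rfl fun i _ => ?_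
      simp [Finsupp.equivCongrLeft_apply, Finsupp.equivMapDomain_apply]
    rw [step1]
    simp only [step2]
    simp only [Finset.smul_sum]
    rw [Finset.sum_comm]
    refine Finset.sum_congr rfl fun l _ => ?_
    have hdet : (∑ σ : Equiv.Perm (Fin k), (Equiv.Perm.sign σ : ℤ) •
          ∏ i, PowerSeries.coeff (l (σ i)) (M (σ i) i))
        = Matrix.det (Matrix.of fun i j : Fin k => PowerSeries.coeff (l i) (M i j)) := by
      rw [Matrix.det_apply]
      exact Finset.sum_congr rfl fun σ _ => by rw [Units.smul_def]; rfl
    rw [hdet]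
    have hB : (Matrix.of fun i j : Fin k => PowerSeries.coeff (l i) (M i j))
        = Matrix.of (fun i j : Fin k =>
            (PowerSeries.coeff (l i) (PowerSeries.X ^ μ i * P i)) *
              (Matrix.vandermonde fun t : Fin k => ((l t : ℕ) : K)) i j) := by
      ext i j
      simp only [Matrix.of_apply, Matrix.vandermonde_apply]
      rw [hent]
    rw [hB, Matrix.det_mul_column, Matrix.det_vandermonde]
  set lμ : Fin k →₀ ℕ := Finsupp.equivFunOnFinite.symm μ with hlμ
  have hmain : ∀ l : Fin k →₀ ℕ, (⇑l : Fin k → ℕ) ≠ μ → ∑ i, l i ≤ ∑ i, μ i →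
      (∏ i, PowerSeries.coeff (l i) (PowerSeries.X ^ μ i * P i)) *
        ∏ i : Fin k, ∏ j ∈ Finset.Ioi i, (((l j : ℕ) : K) - ((l i : ℕ) : K)) = 0 := by
    intro l hne hsum
    by_cases hle : ∀ i, μ i ≤ l i
    · by_cases hinj : Function.Injective (⇑l : Fin k → ℕ)
      · obtain ⟨h1, h2⟩ := sorted_ge μ l hμ hinj hle
        exact absurd (h2 (le_antisymm hsum h1)) hne
      · have hv : ∏ i : Fin k, ∏ j ∈ Finset.Ioi i, (((l j : ℕ) : K) - ((l i : ℕ) : K)) = 0 := by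
          rw [← Matrix.det_vandermonde, Matrix.det_vandermonde_eq_zero_iff]
          rw [Function.not_injective_iff] at hinj
          obtain ⟨a, b, hab, hne'⟩ := hinj
          exact ⟨a, b, by exact_mod_cast hab, hne'⟩
        rw [hv, mul_zero]
    · push_neg at hle
      obtain ⟨i, hi⟩ := hle
      have hz : PowerSeries.coeff (l i) (PowerSeries.X ^ μ i * P i) = 0 := by
        rw [PowerSeries.coeff_X_pow_mul', if_neg (by omega)]
      rw [Finset.prod_eq_zero (Finset.mem_univ i) hz, zero_mul]
  have hvan : ∀ n : ℕ, n < ∑ i, μ i → PowerSeries.coeff n M.det = 0 := by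
    intro n hn
    rw [hkey]
    refine Finset.sum_eq_zero fun l hl => ?_
    rw [Finset.mem_finsuppAntidiag] at hl
    have hsum : ∑ i, l i = n := hl.1
    refine hmain l ?_ (by rw [hsum]; exact hn.le)
    intro hc
    rw [hc] at hsum
    exact absurd hsum (ne_of_gt hn)
  have h1 : ∀ i, PowerSeries.coeff (μ i) (PowerSeries.X ^ μ i * P i) = 1 := by
    intro i
    rw [PowerSeries.coeff_X_pow_mul', if_pos le_rfl, Nat.sub_self,
      PowerSeries.coeff_zero_eq_constantCoeff]
    exact hP i
  have hcoeffS : PowerSeries.coeff (∑ i, μ i) M.det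
      = ∏ i : Fin k, ∏ j ∈ Finset.Ioi i, ((μ j - μ i : ℕ) : K) := by
    rw [hkey]
    have hmem : lμ ∈ Finset.finsuppAntidiag (Finset.univ : Finset (Fin k)) (∑ i, μ i) := by
      rw [Finset.mem_finsuppAntidiag]
      refine ⟨?_, Finset.subset_univ _⟩
      simp [hlμ]
    rw [Finset.sum_eq_single lμ]
    · simp only [hlμ, Finsupp.equivFunOnFinite_symm_apply_apply]
      rw [Finset.prod_congr rfl (fun i _ => h1 i), Finset.prod_const_one, one_mul]
      refine Finset.prod_congr rfl fun i _ => Finset.prod_congr rfl fun j hj => ?_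
      rw [Nat.cast_sub (hμ (Finset.mem_Ioi.mp hj)).le]
    · intro b hb hbne
      rw [Finset.mem_finsuppAntidiag] at hb
      refine hmain b ?_ (le_of_eq hb.1)
      intro hc
      refine hbne (Finsupp.ext fun i => ?_)
      rw [hlμ, Finsupp.equivFunOnFinite_symm_apply_apply]
      exact congrFun hc i
    · intro hno
      exact absurd hmem hno
  have hnz : (∏ i : Fin k, ∏ j ∈ Finset.Ioi i, ((μ j - μ i : ℕ) : K)) ≠ 0 := by
    rw [Finset.prod_ne_zero_iff]
    intro i _
    rw [Finset.prod_ne_zero_iff]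
    intro j hj
    have hij := hμ (Finset.mem_Ioi.mp hj)
    exact Nat.cast_ne_zero.mpr (by omega)
  refine ⟨hvan, hcoeffS, hnz, ?_⟩
  rw [PowerSeries.order_eq_nat]
  exact ⟨by rw [hcoeffS]; exact hnz, fun i hi => hvan i hi⟩
end
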